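/- Let λ > 0 and let f(t) solve the ODE df/dt = λ A f on ℝ² with A = [[−1, 1], [1, −1]] and initial datum f^I having strictly positive entries with f_1^I + f_2^I = 1, so the steady state is f^∞ = (1/2, 1/2). Let ψ be an entropy generator such that either (i) ψ'' is convex on (0,∞), or (ii) ψ' is concave on (0,1) and ψ' is convex on (1,∞). Then the Fisher information I_ψ(f|f^∞) := λ (f_1 − f_2)(ψ'(2 f_1) − ψ'(2 f_2)) decays with rate 4λ: I_ψ(f(t)|f^∞) ≤ e^{−4λ t} · I_ψ(f^I|f^∞) for all t ≥ 0. -/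

import Mathlib

open Real Set

private lemma bgk_d1_hasDeriv {ψ : ℝ → ℝ} (hψsmooth : ContDiffOn ℝ 2 ψ (Ioi 0)) :
    ∀ x ∈ Ioi (0:ℝ), HasDerivAt (deriv ψ) (deriv (deriv ψ) x) x := by
  intro x hx
  have h1 : ContDiffOn ℝ 1 (deriv ψ) (Ioi 0) :=
    hψsmooth.deriv_of_isOpen isOpen_Ioi (by norm_num)
  exact ((h1.differentiableOn one_ne_zero).differentiableAt (isOpen_Ioi.mem_nhds hx)).hasDerivAt

private lemma bgk_phi_hasDeriv {ψ : ℝ → ℝ} (hψsmooth : ContDiffOn ℝ 2 ψ (Ioi 0))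
    {u : ℝ} (hu : u ∈ Ioo (-1:ℝ) 1) :
    HasDerivAt (fun v => deriv ψ (1 + v) - deriv ψ (1 - v))
      (deriv (deriv ψ) (1 + u) + deriv (deriv ψ) (1 - u)) u := by
  have ha : (1 + u) ∈ Ioi (0:ℝ) := by simp only [mem_Ioi]; linarith [hu.1]
  have hb : (1 - u) ∈ Ioi (0:ℝ) := by simp only [mem_Ioi]; linarith [hu.2]
  have h1 : HasDerivAt (fun v => deriv ψ (1 + v)) (deriv (deriv ψ) (1 + u) * 1) u :=
    (bgk_d1_hasDeriv hψsmooth _ ha).comp u ((hasDerivAt_id u).const_add 1)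
  have h2 : HasDerivAt (fun v => deriv ψ (1 - v)) (deriv (deriv ψ) (1 - u) * (-1)) u :=
    (bgk_d1_hasDeriv hψsmooth _ hb).comp u ((hasDerivAt_id u).const_sub 1)
  have := h1.sub h2
  exact this.congr_deriv (by ring)

private lemma bgk_sum_mono {ψ : ℝ → ℝ} (hψsmooth : ContDiffOn ℝ 2 ψ (Ioi 0))
    (hcase : ConvexOn ℝ (Ioi 0) (deriv (deriv ψ)) ∨
      (ConcaveOn ℝ (Ioo 0 1) (deriv ψ) ∧ ConvexOn ℝ (Ioi 1) (deriv ψ)))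
    {a b : ℝ} (ha : a ∈ Ioo (0:ℝ) 1) (hb : b ∈ Ioo (0:ℝ) 1) (hab : a ≤ b) :
    deriv (deriv ψ) (1 + a) + deriv (deriv ψ) (1 - a) ≤
      deriv (deriv ψ) (1 + b) + deriv (deriv ψ) (1 - b) := by
  obtain ⟨ha0, ha1⟩ := ha
  obtain ⟨hb0, hb1⟩ := hb
  rcases hcase with hconv | ⟨hconc, hconv⟩
  · have hmb : (1 - b) ∈ Ioi (0:ℝ) := by simp only [mem_Ioi]; linarith
    have hpb : (1 + b) ∈ Ioi (0:ℝ) := by simp only [mem_Ioi]; linarith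
    have hbne : (2*b) ≠ 0 := by positivity
    have hw1 : (0:ℝ) ≤ (b - a)/(2*b) := div_nonneg (by linarith) (by positivity)
    have hw2 : (0:ℝ) ≤ (b + a)/(2*b) := div_nonneg (by linarith) (by positivity)
    have hwsum : (b - a)/(2*b) + (b + a)/(2*b) = 1 := by
      rw [← add_div, div_eq_one_iff_eq hbne]; ring
    have hwsum2 : (b + a)/(2*b) + (b - a)/(2*b) = 1 := by linarith
    have e1 : (b - a)/(2*b) * (1 - b) + (b + a)/(2*b) * (1 + b) = 1 + a := by
      rw [div_mul_eq_mul_div, div_mul_eq_mul_div, ← add_div, div_eq_iff hbne]; ring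
    have e2 : (b + a)/(2*b) * (1 - b) + (b - a)/(2*b) * (1 + b) = 1 - a := by
      rw [div_mul_eq_mul_div, div_mul_eq_mul_div, ← add_div, div_eq_iff hbne]; ring
    have i1 := hconv.2 hmb hpb hw1 hw2 hwsum
    have i2 := hconv.2 hmb hpb hw2 hw1 hwsum2
    simp only [smul_eq_mul] at i1 i2
    rw [e1] at i1
    rw [e2] at i2
    have key : (b - a)/(2*b) * deriv (deriv ψ) (1 - b) + (b + a)/(2*b) * deriv (deriv ψ) (1 + b)
        + ((b + a)/(2*b) * deriv (deriv ψ) (1 - b) + (b - a)/(2*b) * deriv (deriv ψ) (1 + b))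
        = deriv (deriv ψ) (1 - b) + deriv (deriv ψ) (1 + b) := by
      linear_combination (deriv (deriv ψ) (1 - b) + deriv (deriv ψ) (1 + b)) * hwsum
    linarith
  · have hdiff1 : ∀ x ∈ Ioo (0:ℝ) 1, DifferentiableAt ℝ (deriv ψ) x := fun x hx =>
      (bgk_d1_hasDeriv hψsmooth x (mem_Ioi.2 hx.1)).differentiableAt
    have hdiff2 : ∀ x ∈ Ioi (1:ℝ), DifferentiableAt ℝ (deriv ψ) x := fun x hx =>
      (bgk_d1_hasDeriv hψsmooth x (by simp only [mem_Ioi] at hx ⊢; linarith)).differentiableAt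
    have hA : AntitoneOn (deriv (deriv ψ)) (Ioo 0 1) := hconc.antitoneOn_deriv hdiff1
    have hM : MonotoneOn (deriv (deriv ψ)) (Ioi 1) := hconv.monotoneOn_deriv hdiff2
    have k1 : deriv (deriv ψ) (1 + a) ≤ deriv (deriv ψ) (1 + b) :=
      hM (by simp only [mem_Ioi]; linarith) (by simp only [mem_Ioi]; linarith) (by linarith)
    have k2 : deriv (deriv ψ) (1 - a) ≤ deriv (deriv ψ) (1 - b) :=
      hA (by constructor <;> linarith) (by constructor <;> linarith) (by linarith)
    linarith

private lemma bgk_mvt_step {ψ : ℝ → ℝ} (hψsmooth : ContDiffOn ℝ 2 ψ (Ioi 0))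
    (hcase : ConvexOn ℝ (Ioi 0) (deriv (deriv ψ)) ∨
      (ConcaveOn ℝ (Ioo 0 1) (deriv ψ) ∧ ConvexOn ℝ (Ioi 1) (deriv ψ)))
    {u : ℝ} (hu : u ∈ Ioo (0:ℝ) 1) :
    deriv ψ (1 + u) - deriv ψ (1 - u) ≤
      u * (deriv (deriv ψ) (1 + u) + deriv (deriv ψ) (1 - u)) := by
  set φ : ℝ → ℝ := fun v => deriv ψ (1 + v) - deriv ψ (1 - v) with hφ
  have hcont : ContinuousOn φ (Icc 0 u) := fun x hx =>
    (bgk_phi_hasDeriv hψsmooth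
      ⟨by linarith [hx.1], lt_of_le_of_lt hx.2 hu.2⟩).continuousAt.continuousWithinAt
  obtain ⟨c, hc, hceq⟩ := exists_hasDerivAt_eq_slope φ
    (fun x => deriv (deriv ψ) (1 + x) + deriv (deriv ψ) (1 - x)) hu.1 hcont
    (fun x hx => bgk_phi_hasDeriv hψsmooth ⟨by linarith [hx.1], by linarith [hx.2, hu.2]⟩)
  have phi0 : φ 0 = 0 := by simp [hφ]
  rw [phi0] at hceq
  have hval : φ u = u * (deriv (deriv ψ) (1 + c) + deriv (deriv ψ) (1 - c)) := by
    rw [hceq]; field_simp [hu.1.ne']; ring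
  have hcm : deriv (deriv ψ) (1 + c) + deriv (deriv ψ) (1 - c) ≤
      deriv (deriv ψ) (1 + u) + deriv (deriv ψ) (1 - u) :=
    bgk_sum_mono hψsmooth hcase ⟨hc.1, lt_trans hc.2 hu.2⟩ hu hc.2.le
  calc φ u = u * (deriv (deriv ψ) (1 + c) + deriv (deriv ψ) (1 - c)) := hval
    _ ≤ u * (deriv (deriv ψ) (1 + u) + deriv (deriv ψ) (1 - u)) :=
        mul_le_mul_of_nonneg_left hcm hu.1.le

private lemma bgk_core {ψ : ℝ → ℝ} (hψsmooth : ContDiffOn ℝ 2 ψ (Ioi 0))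
    (hcase : ConvexOn ℝ (Ioi 0) (deriv (deriv ψ)) ∨
      (ConcaveOn ℝ (Ioo 0 1) (deriv ψ) ∧ ConvexOn ℝ (Ioi 1) (deriv ψ)))
    {d e : ℝ} (hd0 : 0 < d) (hd1 : d < 1) (he0 : 0 < e) (he1 : e ≤ 1) :
    d * e * (deriv ψ (1 + d*e) - deriv ψ (1 - d*e)) ≤
      e^2 * (d * (deriv ψ (1 + d) - deriv ψ (1 - d))) := by
  set φ : ℝ → ℝ := fun v => deriv ψ (1 + v) - deriv ψ (1 - v) with hφ
  have hH : ∀ u ∈ Ioo (0:ℝ) 1, HasDerivAt (fun v => φ v / v)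
      (((deriv (deriv ψ) (1 + u) + deriv (deriv ψ) (1 - u)) * u - φ u * 1) / u^2) u := by
    intro u hu
    exact (bgk_phi_hasDeriv hψsmooth ⟨by linarith [hu.1], hu.2⟩).div (hasDerivAt_id u) hu.1.ne'
  have hmono : MonotoneOn (fun v => φ v / v) (Ioo 0 1) := by
    apply monotoneOn_of_deriv_nonneg (convex_Ioo 0 1)
    · exact fun u hu => (hH u hu).continuousAt.continuousWithinAt
    · rw [interior_Ioo]
      exact fun u hu => (hH u hu).differentiableAt.differentiableWithinAt
    · rw [interior_Ioo]
      intro u hu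
      rw [(hH u hu).deriv]
      apply div_nonneg _ (by positivity)
      have h2 := bgk_mvt_step hψsmooth hcase hu
      have hphiu : φ u = deriv ψ (1 + u) - deriv ψ (1 - u) := rfl
      nlinarith [h2, hphiu]
  have hde : d * e ∈ Ioo (0:ℝ) 1 := ⟨by positivity, by nlinarith⟩
  have hdd : d ∈ Ioo (0:ℝ) 1 := ⟨hd0, hd1⟩
  have hle := hmono hde hdd (by nlinarith)
  simp only at hle
  rw [div_le_div_iff₀ (by positivity) hd0] at hle
  simp only [hφ] at hle
  nlinarith [mul_le_mul_of_nonneg_left hle he0.le]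

/-- Fisher information decay at rate `4λ` for the two-velocity
space-homogeneous BGK ODE `df/dt = λ A f` with `A = [[-1,1],[1,-1]]`, steady state
`f^∞ = (1/2, 1/2)`, with strictly positive normalized initial datum.  Here
`I_ψ(f|f^∞) = λ (f₁ - f₂)(ψ'(2 f₁) - ψ'(2 f₂))`. -/
theorem stmt_1
    (lam : ℝ) (hlam : 0 < lam)
    (ψ : ℝ → ℝ)
    (hψcont : ContinuousOn ψ (Ici 0))
    (hψsmooth : ContDiffOn ℝ 2 ψ (Ioi 0))
    (hψ1 : ψ 1 = 0)
    (hψnonneg : ∀ x ∈ Ici (0:ℝ), 0 ≤ ψ x)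
    (hψ'' : ∀ x ∈ Ioi (0:ℝ), 0 ≤ deriv (deriv ψ) x)
    (hcase : ConvexOn ℝ (Ioi 0) (deriv (deriv ψ)) ∨
      (ConcaveOn ℝ (Ioo 0 1) (deriv ψ) ∧ ConvexOn ℝ (Ioi 1) (deriv ψ)))
    (fI : ℝ × ℝ) (hI1 : 0 < fI.1) (hI2 : 0 < fI.2) (hIsum : fI.1 + fI.2 = 1)
    (f : ℝ → ℝ × ℝ)
    (hf0 : f 0 = fI)
    (hode : ∀ t : ℝ, HasDerivAt f (lam • (-(f t).1 + (f t).2, (f t).1 - (f t).2)) t) :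
    ∀ t : ℝ, 0 ≤ t →
      lam * ((f t).1 - (f t).2) * (deriv ψ (2 * (f t).1) - deriv ψ (2 * (f t).2)) ≤
        Real.exp (-(4 * lam) * t) *
          (lam * (fI.1 - fI.2) * (deriv ψ (2 * fI.1) - deriv ψ (2 * fI.2))) := by
  -- component derivatives
  have h1 : ∀ s : ℝ, HasDerivAt (fun r => (f r).1) (lam * (-(f s).1 + (f s).2)) s := by
    intro s
    have h := ((hode s).hasFDerivAt.fst).hasDerivAt
    simpa using h
  have h2 : ∀ s : ℝ, HasDerivAt (fun r => (f r).2) (lam * ((f s).1 - (f s).2)) s := by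
    intro s
    have h := ((hode s).hasFDerivAt.snd).hasDerivAt
    simpa using h
  -- mass conservation
  have hsum : ∀ s : ℝ, (f s).1 + (f s).2 = 1 := by
    have hg : ∀ s : ℝ, HasDerivAt (fun r => (f r).1 + (f r).2) 0 s := by
      intro s
      have := (h1 s).add (h2 s)
      exact this.congr_deriv (by ring)
    have hconst := is_const_of_deriv_eq_zero (𝕜 := ℝ)
      (f := fun r => (f r).1 + (f r).2)
      (fun s => (hg s).differentiableAt) (fun s => (hg s).deriv)
    intro s
    have := hconst s 0
    simp only [hf0] at this
    linarith [this, hIsum]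
  -- explicit solution of the difference
  have hu : ∀ s : ℝ, (f s).1 - (f s).2 = (fI.1 - fI.2) * Real.exp (-(2*lam)*s) := by
    have hu' : ∀ s : ℝ, HasDerivAt (fun r => (f r).1 - (f r).2)
        (-(2*lam) * ((f s).1 - (f s).2)) s := by
      intro s
      have := (h1 s).sub (h2 s)
      exact this.congr_deriv (by ring)
    have hE : ∀ s : ℝ, HasDerivAt (fun r => Real.exp ((2*lam)*r))
        ((2*lam) * Real.exp ((2*lam)*s)) s := by
      intro s
      have h := (Real.hasDerivAt_exp ((2*lam)*s)).comp s ((hasDerivAt_id s).const_mul (2*lam))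
      simp only [Function.comp_def, id_eq] at h
      exact h.congr_deriv (by ring)
    have hv : ∀ s : ℝ, HasDerivAt (fun r => ((f r).1 - (f r).2) * Real.exp ((2*lam)*r)) 0 s := by
      intro s
      have := (hu' s).mul (hE s)
      exact this.congr_deriv (by ring)
    have hconst := is_const_of_deriv_eq_zero (𝕜 := ℝ)
      (f := fun r => ((f r).1 - (f r).2) * Real.exp ((2*lam)*r))
      (fun s => (hv s).differentiableAt) (fun s => (hv s).deriv)
    intro s
    have h0 := hconst s 0
    simp only [hf0, mul_zero, Real.exp_zero, mul_one] at h0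
    have hEne : Real.exp ((2*lam)*s) ≠ 0 := Real.exp_ne_zero _
    rw [show -(2*lam)*s = -((2*lam)*s) by ring, Real.exp_neg]
    field_simp
    linarith [h0]
  intro t ht
  set d : ℝ := fI.1 - fI.2 with hdd
  set e : ℝ := Real.exp (-(2*lam)*t) with hee
  have he0 : 0 < e := Real.exp_pos _
  have he1 : e ≤ 1 := by
    rw [hee]
    apply Real.exp_le_one_iff.2
    nlinarith
  have hd1 : d < 1 := by rw [hdd]; linarith
  have hdm : -1 < d := by rw [hdd]; linarith
  have hft1 : 2 * (f t).1 = 1 + d * e := by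
    linarith [hu t, hsum t]
  have hft2 : 2 * (f t).2 = 1 - d * e := by
    linarith [hu t, hsum t]
  have hfi1 : 2 * fI.1 = 1 + d := by rw [hdd]; linarith
  have hfi2 : 2 * fI.2 = 1 - d := by rw [hdd]; linarith
  have hexp2 : Real.exp (-(4 * lam) * t) = e * e := by
    rw [hee, ← Real.exp_add]
    congr 1
    ring
  rw [hexp2, hft1, hft2, hfi1, hfi2, hu t, ← hee]
  rcases lt_trichotomy d 0 with hneg | hzero | hpos
  · have hc := bgk_core hψsmooth hcase (d := -d) (e := e)
      (by linarith) (by linarith) he0 he1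
    rw [show (1 + -d * e : ℝ) = 1 - d * e by ring, show (1 - -d * e : ℝ) = 1 + d * e by ring,
      show (1 + -d : ℝ) = 1 - d by ring, show (1 - -d : ℝ) = 1 + d by ring] at hc
    nlinarith [mul_le_mul_of_nonneg_left hc hlam.le]
  · rw [hzero]
    norm_num
  · have hc := bgk_core hψsmooth hcase hpos hd1 he0 he1
    nlinarith [mul_le_mul_of_nonneg_left hc hlam.le]
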